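/- Let G be a finite group with subgroups H ≤ A ⊴ G (A normal in G). Then A is a perfect code of the pair (G,H) if and only if G = N_G(H)A and N_A(H)/H is a perfect code of the group N_G(H)/H. -/

import Mathlib

open scoped Pointwise

/-- A subset `C` of the vertices of a graph `Γ` is an `(r,s)`-regular set if every vertex
in `C` has exactly `r` neighbours in `C` and every vertex outside `C` has exactly `s`
neighbours in `C`. -/
def IsRegularVertexSet {V : Type*} (Γ : SimpleGraph V) (C : Set V) (r s : ℕ) : Prop :=
  (∀ v ∈ C, {w | w ∈ C ∧ Γ.Adj v w}.ncard = r) ∧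
  ∀ v ∉ C, {w | w ∈ C ∧ Γ.Adj v w}.ncard = s

/-- The coset graph `Cos(G,H,U)` on the left cosets of `H` in `G`:
`g₁H` and `g₂H` are adjacent iff `g₁⁻¹ g₂ ∈ U`. -/
def cosetGraph {G : Type*} [Group G] (H : Subgroup G) (U : Set G) : SimpleGraph (G ⧸ H) :=
  SimpleGraph.fromRel fun C D =>
    ∃ g₁ g₂ : G, QuotientGroup.mk g₁ = C ∧ QuotientGroup.mk g₂ = D ∧ g₁⁻¹ * g₂ ∈ U

/-- `U` is a valid connection set for a coset graph `Cos(G,H,U)`: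
inverse-closed, disjoint from `H`, and a union of double cosets of `H` (`HUH = U`). -/
def IsCosetGraphConnectionSet {G : Type*} [Group G] (H : Subgroup G) (U : Set G) : Prop :=
  U⁻¹ = U ∧ (H : Set G) ∩ U = ∅ ∧ (H : Set G) * U * (H : Set G) = U

/-- `A` is an `(r,s)`-regular set of the pair `(G,H)`: there is a coset graph
`Cos(G,H,U)` in which the set of left cosets of `H` in `A` is an `(r,s)`-regular set. -/
def IsRegularSetOfPair {G : Type*} [Group G] (H A : Subgroup G) (r s : ℕ) : Prop :=
  ∃ U : Set G, IsCosetGraphConnectionSet H U ∧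
    IsRegularVertexSet (cosetGraph H U)
      {C : G ⧸ H | ∃ a ∈ A, QuotientGroup.mk a = C} r s

/-- `A` is a perfect code of the pair `(G,H)` iff it is a `(0,1)`-regular set of `(G,H)`. -/
def IsPerfectCodeOfPair {G : Type*} [Group G] (H A : Subgroup G) : Prop :=
  IsRegularSetOfPair H A 0 1

/-- A subgroup `A` is an `(r,s)`-regular set of `G` iff it is an `(r,s)`-regular set of
the pair `(G,1)`, i.e. an `(r,s)`-regular set in some Cayley graph of `G`. -/
def IsRegularSetOfGroup {G : Type*} [Group G] (A : Subgroup G) (r s : ℕ) : Prop :=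
  IsRegularSetOfPair ⊥ A r s

/-- A subgroup `A` is a perfect code of `G` iff it is a `(0,1)`-regular set of `G`. -/
def IsPerfectCodeOfGroup {G : Type*} [Group G] (A : Subgroup G) : Prop :=
  IsRegularSetOfGroup A 0 1

/-- The conjugate subgroup `K^t = t⁻¹ K t`. -/
def conjSub {G : Type*} [Group G] (K : Subgroup G) (t : G) : Subgroup G :=
  K.map (MulAut.conj t⁻¹).toMonoidHom

/-- The subgroup `N_A(H)/H` of the quotient group `N_G(H)/H`, where
`N_A(H) = N_G(H) ∩ A`. -/
def NAHmodH {G : Type*} [Group G] (H A : Subgroup G) :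
    Subgroup ((Subgroup.normalizer (H : Set G)) ⧸ H.subgroupOf (Subgroup.normalizer (H : Set G))) :=
  Subgroup.map (QuotientGroup.mk' (H.subgroupOf (Subgroup.normalizer (H : Set G)))) (A.subgroupOf (Subgroup.normalizer (H : Set G)))

section Helpers

variable {G : Type*} [Group G]

lemma connSet_hmul {H : Subgroup G} {U : Set G}
    (hU : (H:Set G) * U * (H:Set G) = U) {h u h' : G} (hh : h ∈ H) (hu : u ∈ U) (hh' : h' ∈ H) :
    h * u * h' ∈ U := by
  rw [← hU]
  exact Set.mul_mem_mul (Set.mul_mem_mul hh hu) hh'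

lemma cosetGraph_adj {H : Subgroup G} {U : Set G} (hU : IsCosetGraphConnectionSet H U)
    (g g' : G) :
    (cosetGraph H U).Adj (QuotientGroup.mk g : G ⧸ H) (QuotientGroup.mk g') ↔ g⁻¹ * g' ∈ U := by
  obtain ⟨hinv, hdisj, hmul⟩ := hU
  rw [cosetGraph, SimpleGraph.fromRel_adj]
  constructor
  · rintro ⟨hne, h | h⟩
    · obtain ⟨g₁, g₂, h1, h2, hu⟩ := h
      have e1 : g₁⁻¹ * g ∈ H := QuotientGroup.eq.mp h1
      have e2 : g₂⁻¹ * g' ∈ H := QuotientGroup.eq.mp h2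
      have : g⁻¹ * g' = (g₁⁻¹ * g)⁻¹ * (g₁⁻¹ * g₂) * (g₂⁻¹ * g') := by group
      rw [this]
      exact connSet_hmul hmul (H.inv_mem e1) hu e2
    · obtain ⟨g₁, g₂, h1, h2, hu⟩ := h
      have e1 : g₁⁻¹ * g' ∈ H := QuotientGroup.eq.mp h1
      have e2 : g₂⁻¹ * g ∈ H := QuotientGroup.eq.mp h2
      have hmem : g'⁻¹ * g = (g₁⁻¹ * g')⁻¹ * (g₁⁻¹ * g₂) * (g₂⁻¹ * g) := by group
      have h3 : g'⁻¹ * g ∈ U := by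
        rw [hmem]; exact connSet_hmul hmul (H.inv_mem e1) hu e2
      have h4 : (g'⁻¹ * g)⁻¹ ∈ U⁻¹ := Set.inv_mem_inv.mpr h3
      rw [hinv] at h4
      simpa using h4
  · intro h
    refine ⟨?_, Or.inl ⟨g, g', rfl, rfl, h⟩⟩
    intro heq
    have h5 : g⁻¹ * g' ∈ H := QuotientGroup.eq.mp heq
    have h6 : g⁻¹ * g' ∈ (H : Set G) ∩ U := ⟨h5, h⟩
    rw [hdisj] at h6
    exact h6

lemma mem_code {H A : Subgroup G} (hHA : H ≤ A) (g : G) :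
    ((QuotientGroup.mk g : G ⧸ H) ∈ {C : G ⧸ H | ∃ a ∈ A, QuotientGroup.mk a = C}) ↔ g ∈ A := by
  constructor
  · rintro ⟨a, ha, hEq⟩
    have h1 : a⁻¹ * g ∈ H := QuotientGroup.eq.mp hEq
    have h2 : a⁻¹ * g ∈ A := hHA h1
    have := A.mul_mem ha h2
    simpa using this
  · intro hg; exact ⟨g, hg, rfl⟩

lemma ncard_eq_one_iff_existsUnique {X : Type*} (s : Set X) :
    s.ncard = 1 ↔ ∃! x, x ∈ s := by
  rw [Set.ncard_eq_one]
  constructor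
  · rintro ⟨a, rfl⟩
    exact ⟨a, rfl, fun y hy => hy⟩
  · rintro ⟨a, ha, hu⟩
    exact ⟨a, Set.eq_singleton_iff_unique_mem.mpr ⟨ha, hu⟩⟩

lemma pair_char [Finite G] (H A : Subgroup G) (hHA : H ≤ A) :
    IsPerfectCodeOfPair H A ↔
      ∃ U : Set G, IsCosetGraphConnectionSet H U ∧
        (∀ a ∈ A, ∀ b ∈ A, a⁻¹ * b ∉ U) ∧
        (∀ g : G, g ∉ A →
          ∃! c : G ⧸ H, ∃ a, a ∈ A ∧ QuotientGroup.mk a = c ∧ g⁻¹ * a ∈ U) := by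
  constructor
  · rintro ⟨U, hconn, h0, h1⟩
    refine ⟨U, hconn, ?_, ?_⟩
    · intro a ha b hb hab
      have hmemA : (QuotientGroup.mk a : G ⧸ H) ∈
          {C : G ⧸ H | ∃ a ∈ A, QuotientGroup.mk a = C} := (mem_code hHA a).mpr ha
      have := h0 _ hmemA
      rw [Set.ncard_eq_zero (Set.toFinite _)] at this
      have hb' : (QuotientGroup.mk b : G ⧸ H) ∈
          {w | w ∈ {C : G ⧸ H | ∃ a ∈ A, QuotientGroup.mk a = C} ∧
            (cosetGraph H U).Adj (QuotientGroup.mk a) w} :=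
        ⟨(mem_code hHA b).mpr hb, (cosetGraph_adj hconn a b).mpr hab⟩
      rw [this] at hb'
      exact hb'
    · intro g hg
      have hmemg : (QuotientGroup.mk g : G ⧸ H) ∉
          {C : G ⧸ H | ∃ a ∈ A, QuotientGroup.mk a = C} := by
        rw [mem_code hHA]; exact hg
      have := h1 _ hmemg
      rw [ncard_eq_one_iff_existsUnique] at this
      have hsetEq : ∀ w : G ⧸ H,
          (w ∈ {C : G ⧸ H | ∃ a ∈ A, QuotientGroup.mk a = C} ∧
            (cosetGraph H U).Adj (QuotientGroup.mk g) w) ↔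
          (∃ a, a ∈ A ∧ QuotientGroup.mk a = w ∧ g⁻¹ * a ∈ U) := by
        intro w
        constructor
        · rintro ⟨⟨a, ha, hw⟩, hadj⟩
          rw [← hw] at hadj
          exact ⟨a, ha, hw, (cosetGraph_adj hconn g a).mp hadj⟩
        · rintro ⟨a, ha, hw, hu⟩
          refine ⟨⟨a, ha, hw⟩, ?_⟩
          rw [← hw]
          exact (cosetGraph_adj hconn g a).mpr hu
      obtain ⟨c, hc, hcu⟩ := this
      exact ⟨c, (hsetEq c).mp hc, fun y hy => hcu y ((hsetEq y).mpr hy)⟩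
  · rintro ⟨U, hconn, hA1, hA2⟩
    refine ⟨U, hconn, ?_, ?_⟩
    · intro v hv
      induction v using QuotientGroup.induction_on with
      | H g =>
        have hg : g ∈ A := (mem_code hHA g).mp hv
        rw [Set.ncard_eq_zero (Set.toFinite _)]
        ext w
        simp only [Set.mem_setOf_eq, Set.mem_empty_iff_false, iff_false]
        rintro ⟨⟨a, ha, hw⟩, hadj⟩
        rw [← hw] at hadj
        exact hA1 g hg a ha ((cosetGraph_adj hconn g a).mp hadj)
    · intro v hv
      induction v using QuotientGroup.induction_on with
      | H g =>
        have hg : g ∉ A := fun h => hv ((mem_code hHA g).mpr h)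
        rw [ncard_eq_one_iff_existsUnique]
        obtain ⟨c, ⟨a, ha, hw, hu⟩, hcu⟩ := hA2 g hg
        refine ⟨c, ⟨⟨a, ha, hw⟩, ?_⟩, ?_⟩
        · rw [← hw]; exact (cosetGraph_adj hconn g a).mpr hu
        · rintro y ⟨⟨b, hb, hy⟩, hadj⟩
          rw [← hy] at hadj
          exact hcu y ⟨b, hb, hy, (cosetGraph_adj hconn g b).mp hadj⟩

lemma mk_bot_injective {K : Type*} [Group K] :
    Function.Injective (QuotientGroup.mk : K → K ⧸ (⊥ : Subgroup K)) := by
  intro a b h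
  have h1 : a⁻¹ * b ∈ (⊥ : Subgroup K) := QuotientGroup.eq.mp h
  rw [Subgroup.mem_bot] at h1
  have := congrArg (a * ·) h1
  simpa using this.symm

lemma group_char {K : Type*} [Group K] [Finite K] (B : Subgroup K) :
    IsPerfectCodeOfGroup B ↔
      ∃ S : Set K, S⁻¹ = S ∧ (∀ a ∈ B, ∀ b ∈ B, a⁻¹ * b ∉ S) ∧
        (∀ k : K, k ∉ B → ∃! b : K, b ∈ B ∧ k⁻¹ * b ∈ S) := by
  rw [IsPerfectCodeOfGroup, IsRegularSetOfGroup, ← IsPerfectCodeOfPair, pair_char ⊥ B bot_le]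
  constructor
  · rintro ⟨S, ⟨hinv, hdisj, -⟩, hB1, hB2⟩
    refine ⟨S, hinv, hB1, ?_⟩
    intro k hk
    obtain ⟨c, ⟨a, ha, hc, hs⟩, hcu⟩ := hB2 k hk
    refine ⟨a, ⟨ha, hs⟩, ?_⟩
    rintro b ⟨hb, hbs⟩
    have : QuotientGroup.mk b = c := hcu _ ⟨b, hb, rfl, hbs⟩
    exact mk_bot_injective (this.trans hc.symm)
  · rintro ⟨S, hinv, hB1, hB2⟩
    have h1S : (1 : K) ∉ S := by
      have := hB1 1 B.one_mem 1 B.one_mem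
      simpa using this
    refine ⟨S, ⟨hinv, ?_, ?_⟩, hB1, ?_⟩
    · ext x
      simp only [Set.mem_inter_iff, Set.mem_empty_iff_false, iff_false, not_and]
      intro hx hxs
      rw [SetLike.mem_coe, Subgroup.mem_bot] at hx
      subst hx
      exact h1S hxs
    · have : ((⊥ : Subgroup K) : Set K) = (1 : Set K) := by
        rw [Subgroup.coe_bot, Set.singleton_one]
      rw [this, one_mul, mul_one]
    · intro k hk
      obtain ⟨b, ⟨hb, hbs⟩, hbu⟩ := hB2 k hk
      refine ⟨QuotientGroup.mk b, ⟨b, hb, rfl, hbs⟩, ?_⟩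
      rintro c ⟨a, ha, hc, has⟩
      rw [← hc]
      exact congrArg QuotientGroup.mk (hbu a ⟨ha, has⟩)

end Helpers

/-- **Theorem C (perfect code case).** Let `H ≤ A ⊴ G`. Then `A` is a perfect code of
`(G,H)` iff `G = N_G(H)A` and `N_A(H)/H` is a perfect code of the group `N_G(H)/H`. -/
theorem theoremC_perfectCode {G : Type*} [Group G] [Fintype G] (H A : Subgroup G)
    (hHA : H ≤ A) (hAnG : A.Normal) :
    IsPerfectCodeOfPair H A ↔
      ((Subgroup.normalizer (H : Set G)) : Set G) * (A : Set G) = Set.univ ∧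
        IsPerfectCodeOfGroup (NAHmodH H A) := by
  set N := Subgroup.normalizer (H : Set G) with hN
  have hHN : H ≤ N := Subgroup.le_normalizer
  rw [pair_char H A hHA, group_char]
  constructor
  · rintro ⟨U, hconn, hA1, hA2⟩
    obtain ⟨hinv, hdisj, hmul⟩ := hconn
    have hA1' : ∀ a ∈ A, a ∉ U := by
      intro a ha hu
      have := hA1 1 A.one_mem a ha
      simp only [inv_one, one_mul] at this
      exact this hu
    -- key: any connection element from outside A into A normalizes H
    have key : ∀ g, g ∉ A → ∀ a, a ∈ A → g⁻¹ * a ∈ U → g⁻¹ * a ∈ N := by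
      intro g hg a ha hx
      obtain ⟨c₀, -, huniq⟩ := hA2 g hg
      have hca : QuotientGroup.mk a = c₀ := huniq _ ⟨a, ha, rfl, hx⟩
      have hconj : ∀ n ∈ H, (g⁻¹ * a)⁻¹ * n * (g⁻¹ * a) ∈ H := by
        intro n hn
        have hb : g * n⁻¹ * g⁻¹ * a ∈ A := by
          have := hAnG.conj_mem n⁻¹ (hHA (H.inv_mem hn)) g
          have h2 := A.mul_mem this ha
          simpa [mul_assoc] using h2
        have hgb : g⁻¹ * (g * n⁻¹ * g⁻¹ * a) ∈ U := by
          have h3 := connSet_hmul hmul (H.inv_mem hn) hx H.one_mem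
          have e : g⁻¹ * (g * n⁻¹ * g⁻¹ * a) = n⁻¹ * (g⁻¹ * a) * 1 := by group
          rw [e]; exact h3
        have hcb : QuotientGroup.mk (g * n⁻¹ * g⁻¹ * a) = c₀ :=
          huniq _ ⟨g * n⁻¹ * g⁻¹ * a, hb, rfl, hgb⟩
        have hba : (g * n⁻¹ * g⁻¹ * a)⁻¹ * a ∈ H := QuotientGroup.eq.mp (hcb.trans hca.symm)
        have e2 : (g * n⁻¹ * g⁻¹ * a)⁻¹ * a = (g⁻¹ * a)⁻¹ * n * (g⁻¹ * a) := by group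
        rw [e2] at hba
        exact hba
      -- (g⁻¹*a)⁻¹ conjugation sends H into H, so (g⁻¹*a)⁻¹ ∈ N by finiteness
      have hinvmem : (g⁻¹ * a)⁻¹ ∈ N := by
        have := Subgroup.mem_normalizer_fintype (S := (H : Set G)) (x := (g⁻¹ * a)⁻¹)
          (fun n hn => by
            have := hconj n hn
            simpa [mul_assoc] using this)
        intro n
        exact this n
      exact (Subgroup.inv_mem_iff N).mp hinvmem
    constructor
    · -- G = N * A
      rw [Set.eq_univ_iff_forall]
      intro g
      by_cases hg : g ∈ A
      · have : (1 : G) * g ∈ (N : Set G) * (A : Set G) :=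
          Set.mul_mem_mul N.one_mem hg
        simpa using this
      · obtain ⟨c₀, ⟨a, ha, hc, hx⟩, -⟩ := hA2 g hg
        have hxN : g⁻¹ * a ∈ N := key g hg a ha hx
        have : a * (g⁻¹ * a)⁻¹ ∈ (A : Set G) * (N : Set G) :=
          Set.mul_mem_mul ha (N.inv_mem hxN)
        have e : a * (g⁻¹ * a)⁻¹ = g := by group
        rw [e] at this
        have comm : (A : Set G) * (N : Set G) = (N : Set G) * (A : Set G) := by
          rw [← Subgroup.normal_mul A N, ← Subgroup.mul_normal N A, sup_comm]
        rw [comm] at this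
        exact this
    · -- the quotient perfect code
      refine ⟨{k | ∃ x : ↥N, (x : G) ∈ U ∧ QuotientGroup.mk x = k}, ?_, ?_, ?_⟩
      · -- S⁻¹ = S
        have hself : ∀ k ∈ {k : ↥N ⧸ H.subgroupOf N | ∃ x : ↥N, (x : G) ∈ U ∧ QuotientGroup.mk x = k},
            k⁻¹ ∈ {k : ↥N ⧸ H.subgroupOf N | ∃ x : ↥N, (x : G) ∈ U ∧ QuotientGroup.mk x = k} := by
          rintro k ⟨x, hxU, rfl⟩
          refine ⟨x⁻¹, ?_, ?_⟩
          · have : ((x : G))⁻¹ ∈ U⁻¹ := Set.inv_mem_inv.mpr hxU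
            rw [hinv] at this
            simpa using this
          · simp
        ext k
        constructor
        · intro hk
          have : k⁻¹ ∈ _ := (Set.mem_inv.mp hk)
          have := hself _ this
          obtain ⟨x, hx, hxk⟩ := this
          exact ⟨x, hx, hxk.trans (inv_inv k)⟩
        · intro hk
          exact Set.mem_inv.mpr (hself _ hk)
      · -- no connection inside B
        rintro b1 hb1 b2 hb2 ⟨x, hxU, hxk⟩
        obtain ⟨y1, hy1, rfl⟩ := Subgroup.mem_map.mp hb1
        obtain ⟨y2, hy2, rfl⟩ := Subgroup.mem_map.mp hb2
        have hy1A : (y1 : G) ∈ A := Subgroup.mem_subgroupOf.mp hy1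
        have hy2A : (y2 : G) ∈ A := Subgroup.mem_subgroupOf.mp hy2
        have hxk' : (QuotientGroup.mk x : ↥N ⧸ H.subgroupOf N) = QuotientGroup.mk (y1⁻¹ * y2) := by
          rw [hxk]; simp [QuotientGroup.mk'_apply]; rfl
        have hz : x⁻¹ * (y1⁻¹ * y2) ∈ H.subgroupOf N := QuotientGroup.eq.mp hxk'
        have hzH : ((x⁻¹ * (y1⁻¹ * y2) : ↥N) : G) ∈ H := Subgroup.mem_subgroupOf.mp hz
        have hxA : (x : G) ∈ A := by
          have e : (x : G) = (y1 : G)⁻¹ * (y2 : G) *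
              (((x⁻¹ * (y1⁻¹ * y2) : ↥N) : G))⁻¹ := by
            push_cast
            group
          rw [e]
          exact A.mul_mem (A.mul_mem (A.inv_mem hy1A) hy2A) (A.inv_mem (hHA hzH))
        exact hA1' _ hxA hxU
      · -- perfect code condition
        intro k hk
        obtain ⟨n, rfl⟩ := QuotientGroup.mk_surjective k
        have hnA : (n : G) ∉ A := by
          intro hnA
          exact hk (Subgroup.mem_map.mpr ⟨n, Subgroup.mem_subgroupOf.mpr hnA, rfl⟩)
        obtain ⟨c₀, ⟨a, ha, hc, hx⟩, huniq⟩ := hA2 (n : G) hnA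
        have hxN : (n : G)⁻¹ * a ∈ N := key _ hnA a ha hx
        set xN : ↥N := ⟨(n : G)⁻¹ * a, hxN⟩ with hxNdef
        have haN : a ∈ N := by
          have := N.mul_mem n.2 hxN
          simpa using this
        set aN : ↥N := ⟨a, haN⟩ with haNdef
        have haEq : aN = n * xN := by
          apply Subtype.ext
          simp [hxNdef, haNdef]
        refine ⟨QuotientGroup.mk aN, ⟨?_, ?_⟩, ?_⟩
        · exact Subgroup.mem_map.mpr ⟨aN, Subgroup.mem_subgroupOf.mpr ha, rfl⟩
        · refine ⟨xN, hx, ?_⟩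
          rw [haEq]
          simp [QuotientGroup.mk_mul]
        · rintro b' ⟨hb'B, x', hx'U, hx'eq⟩
          obtain ⟨y, hy, rfl⟩ := Subgroup.mem_map.mp hb'B
          have hyA : (y : G) ∈ A := Subgroup.mem_subgroupOf.mp hy
          have hx'eq' : (QuotientGroup.mk x' : ↥N ⧸ H.subgroupOf N) = QuotientGroup.mk (n⁻¹ * y) := by
            rw [hx'eq]; simp [QuotientGroup.mk'_apply]; rfl
          have hz : x'⁻¹ * (n⁻¹ * y) ∈ H.subgroupOf N := QuotientGroup.eq.mp hx'eq'
          have hzH : ((x'⁻¹ * (n⁻¹ * y) : ↥N) : G) ∈ H := Subgroup.mem_subgroupOf.mp hz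
          have hnyU : (n : G)⁻¹ * (y : G) ∈ U := by
            have h4 := connSet_hmul hmul H.one_mem hx'U hzH
            have e : (1 : G) * (x' : G) * ((x'⁻¹ * (n⁻¹ * y) : ↥N) : G) =
                (n : G)⁻¹ * (y : G) := by
              push_cast
              group
            rw [e] at h4
            exact h4
          have hcy : QuotientGroup.mk ((y : G)) = c₀ := huniq _ ⟨(y : G), hyA, rfl, hnyU⟩
          have hya : (y : G)⁻¹ * a ∈ H := QuotientGroup.eq.mp (hcy.trans hc.symm)
          have : y⁻¹ * aN ∈ H.subgroupOf N := by
            apply Subgroup.mem_subgroupOf.mpr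
            push_cast
            exact hya
          exact (QuotientGroup.eq.mpr this).symm ▸ rfl
  · rintro ⟨hNA, S, hSinv, hS1, hS2⟩
    have h1S : (1 : ↥N ⧸ H.subgroupOf N) ∉ S := by
      have := hS1 1 (NAHmodH H A).one_mem 1 (NAHmodH H A).one_mem
      simpa using this
    set U : Set G := {g | ∃ x : ↥N, (x : G) = g ∧ QuotientGroup.mk x ∈ S} with hUdef
    have hUmemN : ∀ g ∈ U, g ∈ N := by
      rintro g ⟨x, rfl, -⟩
      exact x.2
    refine ⟨U, ⟨?_, ?_, ?_⟩, ?_, ?_⟩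
    · -- U⁻¹ = U
      have hself : ∀ g ∈ U, g⁻¹ ∈ U := by
        rintro g ⟨x, rfl, hxS⟩
        refine ⟨x⁻¹, by simp, ?_⟩
        have : (QuotientGroup.mk x : ↥N ⧸ H.subgroupOf N)⁻¹ ∈ S⁻¹ := Set.inv_mem_inv.mpr hxS
        rw [hSinv] at this
        simpa using this
      ext g
      constructor
      · intro hg
        have := hself _ (Set.mem_inv.mp hg)
        simpa using this
      · intro hg
        exact Set.mem_inv.mpr (hself _ hg)
    · -- H ∩ U = ∅
      ext g
      simp only [Set.mem_inter_iff, Set.mem_empty_iff_false, iff_false, not_and]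
      rintro hgH ⟨x, rfl, hxS⟩
      have : x ∈ H.subgroupOf N := Subgroup.mem_subgroupOf.mpr hgH
      rw [(QuotientGroup.eq_one_iff x).mpr this] at hxS
      exact h1S hxS
    · -- H U H = U
      apply subset_antisymm
      · rintro g hg
        rw [Set.mem_mul] at hg
        obtain ⟨p, hp, h2, hh2, rfl⟩ := hg
        rw [Set.mem_mul] at hp
        obtain ⟨h1, hh1, u, hu, rfl⟩ := hp
        obtain ⟨x, rfl, hxS⟩ := hu
        have hh1H : h1 ∈ H := hh1
        have hh2H : h2 ∈ H := hh2
        refine ⟨⟨h1, hHN hh1H⟩ * x * ⟨h2, hHN hh2H⟩, rfl, ?_⟩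
        have e1 : QuotientGroup.mk (⟨h1, hHN hh1H⟩ : ↥N) =
            (1 : ↥N ⧸ H.subgroupOf N) :=
          (QuotientGroup.eq_one_iff _).mpr (Subgroup.mem_subgroupOf.mpr hh1H)
        have e2 : QuotientGroup.mk (⟨h2, hHN hh2H⟩ : ↥N) =
            (1 : ↥N ⧸ H.subgroupOf N) :=
          (QuotientGroup.eq_one_iff _).mpr (Subgroup.mem_subgroupOf.mpr hh2H)
        rw [QuotientGroup.mk_mul, QuotientGroup.mk_mul, e1, e2, one_mul, mul_one]
        exact hxS
      · intro g hg
        have : (1 : G) * g * (1 : G) ∈ (H : Set G) * U * (H : Set G) :=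
          Set.mul_mem_mul (Set.mul_mem_mul H.one_mem hg) H.one_mem
        simpa using this
    · -- no connection inside A
      rintro a ha b hb ⟨x, hxe, hxS⟩
      have hxA : (x : G) ∈ A := by rw [hxe]; exact A.mul_mem (A.inv_mem ha) hb
      have hxB : QuotientGroup.mk x ∈ NAHmodH H A :=
        Subgroup.mem_map.mpr ⟨x, Subgroup.mem_subgroupOf.mpr hxA, rfl⟩
      have := hS1 1 (NAHmodH H A).one_mem _ hxB
      simp only [inv_one, one_mul] at this
      exact this hxS
    · -- perfect code condition
      intro g hg
      have hginv : g⁻¹ ∈ (N : Set G) * (A : Set G) := by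
        rw [hNA]; trivial
      rw [Set.mem_mul] at hginv
      obtain ⟨n0, hn0, a0, ha0, heq⟩ := hginv
      -- g = a0⁻¹ * n0⁻¹
      have hgEq : g = a0⁻¹ * n0⁻¹ := by
        have := congrArg (fun z => a0⁻¹ * z⁻¹) heq
        simpa [mul_assoc] using this.symm
      set n1N : ↥N := ⟨n0⁻¹, N.inv_mem hn0⟩ with hn1def
      have hkB : (QuotientGroup.mk n1N : ↥N ⧸ H.subgroupOf N) ∉ NAHmodH H A := by
        intro hmem
        obtain ⟨y, hy, hyk⟩ := Subgroup.mem_map.mp hmem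
        have hyk' : (QuotientGroup.mk y : ↥N ⧸ H.subgroupOf N) = QuotientGroup.mk n1N := hyk
        have hz : y⁻¹ * n1N ∈ H.subgroupOf N := QuotientGroup.eq.mp hyk'
        have hzH : ((y⁻¹ * n1N : ↥N) : G) ∈ H := Subgroup.mem_subgroupOf.mp hz
        have hyA : (y : G) ∈ A := Subgroup.mem_subgroupOf.mp hy
        have hn1A : n0⁻¹ ∈ A := by
          have e : n0⁻¹ = (y : G) * ((y⁻¹ * n1N : ↥N) : G) := by
            push_cast [hn1def]
            group
          rw [e]
          exact A.mul_mem hyA (hHA hzH)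
        exact hg (hgEq ▸ A.mul_mem (A.inv_mem ha0) hn1A)
      obtain ⟨b, ⟨hbB, hbS⟩, hbu⟩ := hS2 _ hkB
      obtain ⟨c, hc, rfl⟩ := Subgroup.mem_map.mp hbB
      have hcA : (c : G) ∈ A := Subgroup.mem_subgroupOf.mp hc
      have hbS' : QuotientGroup.mk (n1N⁻¹ * c) ∈ S := by
        rw [QuotientGroup.mk_mul, QuotientGroup.mk_inv]
        exact hbS
      have hcoe : ((n1N⁻¹ * c : ↥N) : G) = g⁻¹ * (a0⁻¹ * (c : G)) := by
        push_cast [hn1def]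
        rw [hgEq]
        group
      refine ⟨QuotientGroup.mk (a0⁻¹ * (c : G)), ⟨a0⁻¹ * (c : G),
        A.mul_mem (A.inv_mem ha0) hcA, rfl, ?_⟩, ?_⟩
      · exact ⟨n1N⁻¹ * c, hcoe, hbS'⟩
      · rintro y ⟨a', ha', rfl, x', hx'e, hx'S⟩
        -- d = n1N * x' lies over a0 * a'
        have hdA : ((n1N * x' : ↥N) : G) ∈ A := by
          have e : ((n1N * x' : ↥N) : G) = a0 * a' := by
            push_cast [hn1def]
            rw [hx'e, hgEq]
            group
          rw [e]
          exact A.mul_mem ha0 ha'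
        have hdB : QuotientGroup.mk (n1N * x') ∈ NAHmodH H A :=
          Subgroup.mem_map.mpr ⟨n1N * x', Subgroup.mem_subgroupOf.mpr hdA, rfl⟩
        have hdS : (QuotientGroup.mk n1N : ↥N ⧸ H.subgroupOf N)⁻¹ *
            QuotientGroup.mk (n1N * x') ∈ S := by
          have e' : (QuotientGroup.mk n1N : ↥N ⧸ H.subgroupOf N)⁻¹ *
              QuotientGroup.mk (n1N * x') = QuotientGroup.mk x' := by
            rw [← QuotientGroup.mk_inv, ← QuotientGroup.mk_mul, inv_mul_cancel_left]
          rw [e']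
          exact hx'S
        have hdc : (QuotientGroup.mk (n1N * x') : ↥N ⧸ H.subgroupOf N) = QuotientGroup.mk c := hbu _ ⟨hdB, hdS⟩
        have hz : (n1N * x')⁻¹ * c ∈ H.subgroupOf N := QuotientGroup.eq.mp hdc
        have hzH : (((n1N * x')⁻¹ * c : ↥N) : G) ∈ H := Subgroup.mem_subgroupOf.mp hz
        have haa : a'⁻¹ * (a0⁻¹ * (c : G)) ∈ H := by
          have e : a'⁻¹ * (a0⁻¹ * (c : G)) = (((n1N * x')⁻¹ * c : ↥N) : G) := by
            push_cast [hn1def]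
            rw [hx'e, hgEq]
            group
          rw [e]
          exact hzH
        exact QuotientGroup.eq.mpr haa
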